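/- Let k ≥ 1 and let G be a connected graph on n vertices that is edge-maximal with respect to not being 1/k-tough. Then G has the form K_j + (K_{c_1} ∪ ... ∪ K_{c_{kj+1}}) for some integer j with 1 ≤ j < n/(k+1) and positive integers c_1,...,c_{kj+1} summing to n − j. -/

import Mathlib

open SimpleGraph

/-- Number of connected components of `G` after deleting the vertex set `X`. -/
noncomputable def delComp {V : Type*} (G : SimpleGraph V) (X : Set V) : ℕ :=
  Nat.card ((G.induce Xᶜ).ConnectedComponent)

/-- `G` is `t`-tough. -/
def IsTough {V : Type*} [Fintype V] (t : ℝ) (G : SimpleGraph V) : Prop :=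
  ∀ X : Finset V, 1 < delComp G ↑X → t * delComp G ↑X ≤ X.card

/-- The graph `K_j + (K_{c_1} ∪ … ∪ K_{c_s})`: the join of a clique on `j` vertices with
the disjoint union of cliques of orders `c_1, …, c_s`. -/
def JoinCliques (j : ℕ) {s : ℕ} (c : Fin s → ℕ) :
    SimpleGraph ((Fin j) ⊕ (Σ i : Fin s, Fin (c i))) :=
  SimpleGraph.fromRel (fun u v =>
    (∃ a, u = Sum.inl a) ∨ (∃ a, v = Sum.inl a) ∨
      (∃ a b, u = Sum.inr a ∧ v = Sum.inr b ∧ a.1 = b.1))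


lemma reach_sup_edge {V : Type*} {H : SimpleGraph V} {u v x y : V}
    (h : (H ⊔ edge u v).Reachable x y) :
    H.Reachable x y ∨ (H.Reachable x u ∧ H.Reachable v y) ∨
      (H.Reachable x v ∧ H.Reachable u y) := by
  obtain ⟨w⟩ := h
  induction w with
  | nil => exact Or.inl (Reachable.refl _)
  | @cons a b c hadj p ih =>
    rw [sup_adj, edge_adj] at hadj
    rcases hadj with hadj | ⟨⟨rfl, rfl⟩ | ⟨rfl, rfl⟩, hne⟩
    · rcases ih with h1 | ⟨h1, h2⟩ | ⟨h1, h2⟩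
      · exact Or.inl ((Adj.reachable hadj).trans h1)
      · exact Or.inr (Or.inl ⟨(Adj.reachable hadj).trans h1, h2⟩)
      · exact Or.inr (Or.inr ⟨(Adj.reachable hadj).trans h1, h2⟩)
    · rcases ih with h1 | ⟨h1, h2⟩ | ⟨h1, h2⟩
      · exact Or.inr (Or.inl ⟨Reachable.refl _, h1⟩)
      · exact Or.inr (Or.inl ⟨Reachable.refl _, h2⟩)
      · exact Or.inl h2
    · rcases ih with h1 | ⟨h1, h2⟩ | ⟨h1, h2⟩
      · exact Or.inr (Or.inr ⟨Reachable.refl _, h1⟩)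
      · exact Or.inl h2
      · exact Or.inr (Or.inr ⟨Reachable.refl _, h2⟩)

lemma card_comp_le_sup_edge {V : Type*} [Finite V] (H : SimpleGraph V) (u v : V) :
    Nat.card H.ConnectedComponent ≤ Nat.card (H ⊔ edge u v).ConnectedComponent + 1 := by
  classical
  set H' := H ⊔ edge u v with hH'
  haveI : Finite H.ConnectedComponent := Quot.finite _
  haveI : Finite H'.ConnectedComponent := Quot.finite _
  haveI := Fintype.ofFinite H'.ConnectedComponent
  let φ : H.ConnectedComponent → H'.ConnectedComponent :=
    SimpleGraph.ConnectedComponent.map (Hom.ofLE le_sup_left)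
  let g : H.ConnectedComponent → Option H'.ConnectedComponent :=
    fun C => if C = H.connectedComponentMk v then none else some (φ C)
  have hg : Function.Injective g := by
    intro C D hCD
    by_cases hC : C = H.connectedComponentMk v <;> by_cases hD : D = H.connectedComponentMk v
    · rw [hC, hD]
    · simp only [g, if_pos hC, if_neg hD] at hCD; exact absurd hCD (by simp)
    · simp only [g, if_pos hD, if_neg hC] at hCD; exact absurd hCD (by simp)
    · have hCD' : φ C = φ D := by
        simpa only [g, if_neg hC, if_neg hD, Option.some.injEq] using hCD
      obtain ⟨x, rfl⟩ := C.exists_rep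
      obtain ⟨y, rfl⟩ := D.exists_rep
      have hr : H'.Reachable x y :=
        SimpleGraph.ConnectedComponent.exact
          (show H'.connectedComponentMk x = H'.connectedComponentMk y from hCD')
      rcases reach_sup_edge hr with h1 | ⟨h1, h2⟩ | ⟨h1, h2⟩
      · exact SimpleGraph.ConnectedComponent.sound h1
      · exact absurd (SimpleGraph.ConnectedComponent.sound h2.symm) hD
      · exact absurd (SimpleGraph.ConnectedComponent.sound h1) hC
  calc Nat.card H.ConnectedComponent ≤ Nat.card (Option H'.ConnectedComponent) :=
        Nat.card_le_card_of_injective g hg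
    _ = Nat.card H'.ConnectedComponent + 1 := by
        rw [Nat.card_eq_fintype_card, Nat.card_eq_fintype_card, Fintype.card_option]

lemma card_comp_sup_edge_eq {V : Type*} {H : SimpleGraph V} {u v : V} (huv : H.Reachable u v) :
    Nat.card (H ⊔ edge u v).ConnectedComponent = Nat.card H.ConnectedComponent := by
  have key : ∀ x y : V, (H ⊔ edge u v).Reachable x y ↔ H.Reachable x y := by
    intro x y
    refine ⟨fun h => ?_, fun h => h.mono le_sup_left⟩
    rcases reach_sup_edge h with h1 | ⟨h1, h2⟩ | ⟨h1, h2⟩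
    · exact h1
    · exact (h1.trans huv).trans h2
    · exact (h1.trans huv.symm).trans h2
  exact Nat.card_congr (Quot.congrRight key :
    (H ⊔ edge u v).ConnectedComponent ≃ H.ConnectedComponent)

lemma card_comp_eq_one {V : Type*} {H : SimpleGraph V} (h : H.Connected) :
    Nat.card H.ConnectedComponent = 1 := by
  rw [Nat.card_eq_one_iff_unique]
  refine ⟨⟨fun a b => ?_⟩, ⟨H.connectedComponentMk h.nonempty.some⟩⟩
  obtain ⟨x, rfl⟩ := a.exists_rep
  obtain ⟨y, rfl⟩ := b.exists_rep
  exact SimpleGraph.ConnectedComponent.sound (h.preconnected x y)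

lemma induce_sup_edge_mem {V : Type*} (G : SimpleGraph V) (S : Set V) {a b : V}
    (ha : a ∉ S) : (G ⊔ edge a b).induce S = G.induce S := by
  ext x y
  simp only [comap_adj, Function.Embedding.coe_subtype, sup_adj, edge_adj]
  constructor
  · rintro (h | ⟨(⟨h1, h2⟩ | ⟨h1, h2⟩), hne⟩)
    · exact h
    · exact absurd (h1 ▸ x.2) ha
    · exact absurd (h2 ▸ y.2) ha
  · exact Or.inl

lemma induce_sup_edge_compl {V : Type*} (G : SimpleGraph V) (S : Set V) {a b : V}
    (ha : a ∈ S) (hb : b ∈ S) :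
    (G ⊔ edge a b).induce S = (G.induce S) ⊔ edge (⟨a, ha⟩ : S) ⟨b, hb⟩ := by
  ext x y
  simp only [comap_adj, Function.Embedding.coe_subtype, sup_adj, edge_adj, Subtype.ext_iff,
    ne_eq]

lemma joinCliques_adj {j s : ℕ} (c : Fin s → ℕ) (u v : Fin j ⊕ Σ i : Fin s, Fin (c i)) :
    (JoinCliques j c).Adj u v ↔ u ≠ v ∧ ((∃ a, u = Sum.inl a) ∨ (∃ a, v = Sum.inl a) ∨
      ∃ a b, u = Sum.inr a ∧ v = Sum.inr b ∧ a.1 = b.1) := by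
  rw [JoinCliques, fromRel_adj]
  constructor
  · rintro ⟨hne, h | h⟩
    · exact ⟨hne, h⟩
    · refine ⟨hne, ?_⟩
      rcases h with h | h | ⟨a, b, h1, h2, h3⟩
      · exact Or.inr (Or.inl h)
      · exact Or.inl h
      · exact Or.inr (Or.inr ⟨b, a, h2, h1, h3.symm⟩)
  · rintro ⟨hne, h⟩
    exact ⟨hne, Or.inl h⟩

theorem stmt7 (k : ℕ) (hk : 1 ≤ k) (n : ℕ) (G : SimpleGraph (Fin n))
    (hconn : G.Connected)
    (hnt : ¬ IsTough (1 / (k : ℝ)) G)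
    (hmax : ∀ H, G < H → IsTough (1 / (k : ℝ)) H) :
    ∃ j : ℕ, 1 ≤ j ∧ (j : ℝ) < (n : ℝ) / ((k : ℝ) + 1) ∧
      ∃ c : Fin (k * j + 1) → ℕ, (∀ i, 1 ≤ c i) ∧ (∑ i, c i) = n - j ∧
        Nonempty (G ≃g JoinCliques j c) := by
  classical
  have hk0 : (0:ℝ) < k := by
    have : (1:ℝ) ≤ k := by exact_mod_cast hk
    linarith
  rw [IsTough] at hnt
  push_neg at hnt
  obtain ⟨X, hX1, hX2⟩ := hnt
  -- j ≥ 1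
  have hj1 : 1 ≤ X.card := by
    rcases Nat.eq_zero_or_pos X.card with h0 | h
    · exfalso
      have hXe : X = ∅ := Finset.card_eq_zero.mp h0
      rw [hXe] at hX1
      have hone : delComp G (↑(∅ : Finset (Fin n))) = 1 := by
        unfold delComp
        have hs : ((↑(∅ : Finset (Fin n)) : Set (Fin n)))ᶜ = Set.univ := by simp
        rw [hs]
        exact card_comp_eq_one ((induceUnivIso G).connected_iff.mpr hconn)
      omega
    · exact h
  set S : Set (Fin n) := (↑X)ᶜ with hS
  set H : SimpleGraph S := G.induce S with hH
  haveI : Finite H.ConnectedComponent := Quot.finite _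
  set j := X.card with hj
  have hdel : delComp G ↑X = Nat.card H.ConnectedComponent := rfl
  set m := delComp G ↑X with hm
  have hkjm : k * j + 1 ≤ m := by
    have h2 : (k:ℝ) * j < m := by
      have h4 := mul_lt_mul_of_pos_left hX2 hk0
      rwa [one_div, ← mul_assoc, mul_inv_cancel₀ (ne_of_gt hk0), one_mul] at h4
    have h3 : k * j < m := by exact_mod_cast h2
    omega
  have key : ∀ a b : Fin n, a ≠ b → ¬ G.Adj a b →
      delComp (G ⊔ edge a b) ↑X ≤ k * j := by
    intro a b hab hnadj
    have hlt : G < G ⊔ edge a b := by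
      refine lt_of_le_of_ne le_sup_left (fun h => hnadj ?_)
      rw [h, sup_adj, edge_adj]
      exact Or.inr ⟨Or.inl ⟨rfl, rfl⟩, hab⟩
    have ht := hmax _ hlt X
    by_cases hgt : 1 < delComp (G ⊔ edge a b) ↑X
    · have h1 := ht hgt
      have hd : ((delComp (G ⊔ edge a b) ↑X : ℕ):ℝ) ≤ (k:ℝ) * j := by
        have h4 := mul_le_mul_of_nonneg_left h1 (le_of_lt hk0)
        rw [one_div, ← mul_assoc, mul_inv_cancel₀ (ne_of_gt hk0), one_mul] at h4
        exact h4
      exact_mod_cast hd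
    · push_neg at hgt
      have : 1 ≤ k * j := Nat.one_le_iff_ne_zero.mpr (by positivity)
      omega
  have hA : ∀ a b : Fin n, a ≠ b → ¬ G.Adj a b → a ∉ X := by
    intro a b hab hnadj haX
    have heq : delComp (G ⊔ edge a b) ↑X = m := by
      rw [hm]
      unfold delComp
      rw [induce_sup_edge_mem G _ (by simp [hS, haX] : a ∉ S)]
    have := key a b hab hnadj
    omega
  have hAdjX : ∀ a ∈ X, ∀ b, a ≠ b → G.Adj a b := by
    intro a haX b hab
    by_contra hnadj
    exact hA a b hab hnadj haX
  have hB : ∀ x y : S, H.connectedComponentMk x = H.connectedComponentMk y → x ≠ y →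
      G.Adj ↑x ↑y := by
    intro x y hcomp hxy
    by_contra hnadj
    have hab : (↑x : Fin n) ≠ ↑y := fun h => hxy (Subtype.ext h)
    have heq : delComp (G ⊔ edge (↑x) (↑y)) ↑X = m := by
      rw [hm]
      unfold delComp
      rw [induce_sup_edge_compl G S x.2 y.2]
      exact card_comp_sup_edge_eq (ConnectedComponent.exact hcomp)
    have := key ↑x ↑y hab hnadj
    omega
  have hmeq : m = k * j + 1 := by
    refine le_antisymm ?_ hkjm
    have h2 : Nontrivial H.ConnectedComponent :=
      Finite.one_lt_card_iff_nontrivial.mp (by rw [← hdel]; exact hX1)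
    obtain ⟨C, D, hCD⟩ := h2.exists_pair_ne
    obtain ⟨x, rfl⟩ := C.exists_rep
    obtain ⟨y, rfl⟩ := D.exists_rep
    have hxyne : (↑x : Fin n) ≠ ↑y := by
      intro h
      exact hCD (congrArg (Quot.mk H.Reachable) (Subtype.ext h))
    have hnadj : ¬ G.Adj ↑x ↑y := by
      intro hadj
      exact hCD (SimpleGraph.ConnectedComponent.sound
        (SimpleGraph.Adj.reachable (show H.Adj x y from hadj)))
    have h1 := key ↑x ↑y hxyne hnadj
    have h2' : delComp (G ⊔ edge (↑x) (↑y)) ↑X = Nat.card (H ⊔ edge x y).ConnectedComponent := by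
      unfold delComp
      rw [induce_sup_edge_compl G S x.2 y.2]
    have h3 := card_comp_le_sup_edge H x y
    omega
  -- construction phase
  haveI := Fintype.ofFinite H.ConnectedComponent
  have hcard : Nat.card H.ConnectedComponent = k * j + 1 := by omega
  let e : H.ConnectedComponent ≃ Fin (k * j + 1) := Finite.equivFinOfCardEq hcard
  let fib : Fin (k * j + 1) → Type _ := fun i => {x : S // H.connectedComponentMk x = e.symm i}
  let c : Fin (k * j + 1) → ℕ := fun i => Nat.card (fib i)
  have hc1 : ∀ i, 1 ≤ c i := by
    intro i
    obtain ⟨x, hx⟩ := (e.symm i).exists_rep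
    haveI : Nonempty (fib i) := ⟨⟨x, hx⟩⟩
    exact Nat.card_pos
  let eX : {a : Fin n // a ∈ X} ≃ Fin j := Fintype.equivFinOfCardEq (by simp [hj])
  let eS : {a : Fin n // ¬ a ∈ X} ≃ S := Equiv.subtypeEquivRight (fun a => by simp [hS])
  let e1 : S ≃ Σ C : H.ConnectedComponent, {x : S // H.connectedComponentMk x = C} :=
    (Equiv.sigmaFiberEquiv H.connectedComponentMk).symm
  let e2 : (Σ C : H.ConnectedComponent, {x : S // H.connectedComponentMk x = C}) ≃
      Σ i : Fin (k * j + 1), fib i :=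
    (Equiv.sigmaCongrLeft (β := fun C => {x : S // H.connectedComponentMk x = C}) e.symm).symm
  let e3 : (Σ i, fib i) ≃ Σ i, Fin (c i) :=
    Equiv.sigmaCongrRight (fun i => Finite.equivFin (fib i))
  let ψ : S ≃ Σ i, Fin (c i) := e1.trans (e2.trans e3)
  have hψfst : ∀ x : S, (ψ x).1 = e (H.connectedComponentMk x) := by
    intro x
    rcases hh : e2 (e1 x) with ⟨i, b⟩
    have h2 : e1 x = e2.symm ⟨i, b⟩ := by rw [← hh, Equiv.symm_apply_apply]
    have h3 : H.connectedComponentMk x = e.symm i := by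
      have : (e1 x).1 = (e2.symm ⟨i, b⟩).1 := congrArg Sigma.fst h2
      exact this
    have h4 : (ψ x).1 = i := by
      show (e3 (e2 (e1 x))).1 = i
      rw [hh]
      rfl
    rw [h4, h3, Equiv.apply_symm_apply]
  let φ : Fin n ≃ (Fin j ⊕ Σ i, Fin (c i)) :=
    (Equiv.sumCompl (fun a => a ∈ X)).symm.trans (Equiv.sumCongr eX (eS.trans ψ))
  have hφmem : ∀ a (h : a ∈ X), φ a = Sum.inl (eX ⟨a, h⟩) := by
    intro a h
    simp only [φ, Equiv.trans_apply, Equiv.sumCompl_symm_apply_of_pos h,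
      Equiv.sumCongr_apply, Sum.map_inl]
  have hφnot : ∀ (x : S), φ ↑x = Sum.inr (ψ x) := by
    intro x
    have hx : (↑x : Fin n) ∉ X := by
      intro hmem
      exact (x.2 : (↑x : Fin n) ∉ (↑X : Set (Fin n))) hmem
    simp only [φ, Equiv.trans_apply, Equiv.sumCompl_symm_apply_of_neg hx,
      Equiv.sumCongr_apply, Sum.map_inr]
    have h6 : eS ⟨↑x, hx⟩ = x := Subtype.ext rfl
    rw [Equiv.trans_apply, h6]
    rfl
  have hmemS : ∀ a : Fin n, a ∉ X → a ∈ S := by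
    intro a ha
    rw [hS]
    simpa using ha
  -- total count
  have hn : n = j + ∑ i, c i := by
    have hcc := Fintype.card_congr φ
    simpa [Fintype.card_sigma] using hcc
  have hsum : k * j + 1 ≤ ∑ i, c i := by
    calc k * j + 1 = ∑ _i : Fin (k * j + 1), 1 := by simp
    _ ≤ ∑ i, c i := Finset.sum_le_sum (fun i _ => hc1 i)
  refine ⟨j, hj1, ?_, c, hc1, ?_, ⟨⟨φ, ?_⟩⟩⟩
  · rw [lt_div_iff₀ (by linarith : (0:ℝ) < (k:ℝ) + 1)]
    have hring : j * (k + 1) = k * j + j := by ring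
    have hjn : j * (k + 1) < n := by omega
    exact_mod_cast hjn
  · omega
  · intro a b
    rw [joinCliques_adj]
    by_cases ha : a ∈ X <;> by_cases hb : b ∈ X
    · rw [hφmem a ha, hφmem b hb]
      constructor
      · rintro ⟨hne, -⟩
        refine hAdjX a ha b (fun hab => hne ?_)
        subst hab
        rfl
      · intro hadj
        refine ⟨fun h => ?_, Or.inl ⟨_, rfl⟩⟩
        have h2 := eX.injective (Sum.inl.inj h)
        exact hadj.ne (congrArg Subtype.val h2)
    · rw [hφmem a ha, show φ b = Sum.inr (ψ ⟨b, hmemS b hb⟩) from hφnot ⟨b, hmemS b hb⟩]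
      have hab : a ≠ b := fun h => hb (h ▸ ha)
      exact ⟨fun _ => hAdjX a ha b hab, fun _ => ⟨Sum.inl_ne_inr, Or.inl ⟨_, rfl⟩⟩⟩
    · rw [hφmem b hb, show φ a = Sum.inr (ψ ⟨a, hmemS a ha⟩) from hφnot ⟨a, hmemS a ha⟩]
      have hab : b ≠ a := fun h => ha (h ▸ hb)
      exact ⟨fun _ => (hAdjX b hb a hab).symm,
        fun _ => ⟨Sum.inr_ne_inl, Or.inr (Or.inl ⟨_, rfl⟩)⟩⟩
    · rw [show φ a = Sum.inr (ψ ⟨a, hmemS a ha⟩) from hφnot ⟨a, hmemS a ha⟩,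
        show φ b = Sum.inr (ψ ⟨b, hmemS b hb⟩) from hφnot ⟨b, hmemS b hb⟩]
      set x : S := ⟨a, hmemS a ha⟩ with hxdef
      set y : S := ⟨b, hmemS b hb⟩ with hydef
      constructor
      · rintro ⟨hne, (⟨a', h⟩ | ⟨a', h⟩ | ⟨p, q, hp, hq, hpq⟩)⟩
        · exact absurd h (by simp)
        · exact absurd h (by simp)
        · have hxy : x ≠ y := fun h => hne (by rw [h])
          have hp' : ψ x = p := Sum.inr.inj hp
          have hq' : ψ y = q := Sum.inr.inj hq
          rw [← hp', ← hq', hψfst, hψfst] at hpq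
          exact hB x y (e.injective hpq) hxy
      · intro hadj
        refine ⟨fun h => ?_, Or.inr (Or.inr ⟨ψ x, ψ y, rfl, rfl, ?_⟩)⟩
        · have h2 := ψ.injective (Sum.inr.inj h)
          exact hadj.ne (congrArg Subtype.val h2)
        · rw [hψfst, hψfst]
          exact congrArg e (SimpleGraph.ConnectedComponent.connectedComponentMk_eq_of_adj
            (show H.Adj x y from hadj))
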